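/- For 1 ≤ i < j ≤ n with (i,j) ≠ (1,n), the permutation σ₀ fixing 1,…,i−1 and j+1,…,n and reversing the interval {i,…,j} (i.e., σ₀ sends k to i+j−k for i ≤ k ≤ j) is an upper bound in the weak Bruhat order for every minimal element of the set Rev_n(i,j) = {σ ∈ S_n \ {id, w_0} : (i)σ > (j)σ}, and σ₀ itself lies in Rev_n(i,j). -/

import Mathlib

/-- The weak Bruhat order on the symmetric group on `{0, …, n-1}`. -/
def weakBruhat (n : ℕ) (σ τ : Equiv.Perm (Fin n)) : Prop :=
  ∀ i j : Fin n, i < j → σ j < σ i → τ j < τ i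

/-- The set `Rev_n(i,j)`: permutations other than the identity and the longest element `w₀`
that invert the pair `(i,j)`. -/
def revSet (n : ℕ) (i j : Fin n) : Set (Equiv.Perm (Fin n)) :=
  {σ | σ ≠ 1 ∧ σ ≠ Fin.revPerm ∧ σ j < σ i}

/-- `σ` is a minimal element of `Rev_n(i,j)` in the induced weak Bruhat order. -/
def minimalInRev (n : ℕ) (i j : Fin n) (σ : Equiv.Perm (Fin n)) : Prop :=
  σ ∈ revSet n i j ∧ ∀ τ ∈ revSet n i j, weakBruhat n τ σ → τ = σ

/-- The map reversing the interval `{i, …, j}` of `Fin n` and fixing everything else. -/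
def revIntFun (n : ℕ) (i j : Fin n) (k : Fin n) : Fin n :=
  if h : (i : ℕ) ≤ (k : ℕ) ∧ (k : ℕ) ≤ (j : ℕ) then
    ⟨(i : ℕ) + (j : ℕ) - (k : ℕ), by have := j.isLt; omega⟩
  else k

theorem revIntFun_involutive (n : ℕ) (i j : Fin n) :
    Function.Involutive (revIntFun n i j) := by
  intro k
  unfold revIntFun
  by_cases h : (i : ℕ) ≤ (k : ℕ) ∧ (k : ℕ) ≤ (j : ℕ)
  · rw [dif_pos h]
    have hj := j.isLt
    rw [dif_pos (by simp; omega)]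
    exact Fin.ext (by simp; omega)
  · rw [dif_neg h, dif_neg h]

/-- The permutation `σ₀` fixing everything outside `{i, …, j}` and sending `k ↦ i+j-k`
for `i ≤ k ≤ j`. -/
def intervalRev (n : ℕ) (i j : Fin n) : Equiv.Perm (Fin n) :=
  (revIntFun_involutive n i j).toPerm

/-- for `i < j` with `(i,j) ≠ (1,n)` (0-indexed: `(i,j) ≠ (0,n-1)`), the
interval-reversing permutation `σ₀` lies in `Rev_n(i,j)` and is an upper bound, in the
weak Bruhat order, for every minimal element of `Rev_n(i,j)`. -/
lemma swapMono {n : ℕ} (k : ℕ) (hk : k + 1 < n) (u v : Fin n) (huv : u < v)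
    (hne : ¬(u = (⟨k, by omega⟩ : Fin n) ∧ v = ⟨k + 1, hk⟩)) :
    Equiv.swap (⟨k, by omega⟩ : Fin n) ⟨k + 1, hk⟩ u
      < Equiv.swap (⟨k, by omega⟩ : Fin n) ⟨k + 1, hk⟩ v := by
  rw [Equiv.swap_apply_def, Equiv.swap_apply_def]
  split_ifs <;>
    (simp only [Fin.lt_def, Fin.ext_iff, Fin.val_mk, not_and] at *; omega)

lemma monoAux {n : ℕ} (π : Equiv.Perm (Fin n)) (u : ℕ) :
    ∀ m (h : u + m < n),
      (∀ k (hk : k + 1 < n), u ≤ k → k < u + m → π ⟨k, by omega⟩ < π ⟨k + 1, hk⟩) →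
      π ⟨u, by omega⟩ ≤ π ⟨u + m, h⟩ := by
  intro m
  induction m with
  | zero => intro h _; exact le_refl _
  | succ m ih =>
    intro h hstep
    have h1 : u + m < n := by omega
    have h2 := ih h1 (fun k hk hk1 hk2 => hstep k hk hk1 (by omega))
    have h3 : π ⟨u + m, h1⟩ < π ⟨u + m + 1, by omega⟩ :=
      hstep (u + m) (by omega) (by omega) (by omega)
    exact le_of_lt (lt_of_le_of_lt h2 h3)

theorem intervalRev_upper_bound (n : ℕ) (i j : Fin n) (hij : i < j)
    (hnot : ¬((i : ℕ) = 0 ∧ (j : ℕ) = n - 1)) :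
    intervalRev n i j ∈ revSet n i j ∧
    ∀ σ : Equiv.Perm (Fin n), minimalInRev n i j σ → weakBruhat n σ (intervalRev n i j) := by
  have hij' : (i : ℕ) < (j : ℕ) := hij
  have hjn : (j : ℕ) < n := j.isLt
  have happ : ∀ k : Fin n, intervalRev n i j k = revIntFun n i j k := fun k => rfl
  have hval : ∀ (k : Fin n) (h1 : (i : ℕ) ≤ k) (h2 : (k : ℕ) ≤ j),
      intervalRev n i j k = ⟨(i : ℕ) + j - k, by omega⟩ := by
    intro k h1 h2
    rw [happ k]
    unfold revIntFun
    rw [dif_pos ⟨h1, h2⟩]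
  have hfix : ∀ k : Fin n, ¬((i : ℕ) ≤ k ∧ (k : ℕ) ≤ j) → intervalRev n i j k = k := by
    intro k h
    rw [happ k]
    unfold revIntFun
    rw [dif_neg h]
  have hσ0i : intervalRev n i j i = j := by
    rw [hval i (le_refl _) (le_of_lt hij')]; exact Fin.ext (by simp)
  have hσ0j : intervalRev n i j j = i := by
    rw [hval j (le_of_lt hij') (le_refl _)]; exact Fin.ext (by simp)
  have hmem : intervalRev n i j ∈ revSet n i j := by
    refine ⟨?_, ?_, ?_⟩
    · intro h
      have := congrArg (fun e : Equiv.Perm (Fin n) => e i) h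
      simp only [hσ0i, Equiv.Perm.one_apply] at this
      exact absurd (congrArg Fin.val this) (by omega)
    · intro h
      by_cases hi0 : (i : ℕ) = 0
      · have hj1 : (j : ℕ) < n - 1 := by
          have := hnot
          rcases Nat.lt_or_ge (j : ℕ) (n - 1) with h' | h'
          · exact h'
          · exact absurd ⟨hi0, by omega⟩ this
        set x : Fin n := ⟨n - 1, by omega⟩ with hx
        have h1 : intervalRev n i j x = x := hfix x (by simp [hx]; omega)
        have := congrArg (fun e : Equiv.Perm (Fin n) => e x) h
        simp only [h1] at this
        have h2 : (x : ℕ) = ((Fin.revPerm x : Fin n) : ℕ) := congrArg Fin.val this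
        simp [hx, Fin.val_rev] at h2
        omega
      · set x : Fin n := ⟨0, by omega⟩ with hx
        have h1 : intervalRev n i j x = x := hfix x (by simp [hx]; omega)
        have := congrArg (fun e : Equiv.Perm (Fin n) => e x) h
        simp only [h1] at this
        have h2 : (x : ℕ) = ((Fin.revPerm x : Fin n) : ℕ) := congrArg Fin.val this
        simp [hx, Fin.val_rev] at h2
        omega
    · rw [hσ0i, hσ0j]; exact hij
  refine ⟨hmem, ?_⟩
  rintro σ ⟨⟨hσ1, hσrev, hσij⟩, hmin⟩
  have hσij' : ((σ j : Fin n) : ℕ) < ((σ i : Fin n) : ℕ) := hσij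
  -- Key step: every inverse descent of σ is at the pair (σ j, σ i) with σ i = σ j + 1
  have hP : ∀ (k : ℕ) (hk : k + 1 < n),
      σ⁻¹ ⟨k + 1, hk⟩ < σ⁻¹ ⟨k, by omega⟩ →
      σ i = ⟨k + 1, hk⟩ ∧ σ j = ⟨k, by omega⟩ := by
    intro k hk hdes
    by_contra hcon
    set s := Equiv.swap (⟨k, by omega⟩ : Fin n) ⟨k + 1, hk⟩ with hs
    set τ := s * σ with hτdef
    have hτapp : ∀ x, τ x = s (σ x) := fun x => rfl
    have hτσ : weakBruhat n τ σ := by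
      intro p q hpq hinvτ
      rcases lt_trichotomy (σ q) (σ p) with h | h | h
      · exact h
      · exact absurd (σ.injective h) (ne_of_lt hpq).symm
      · exfalso
        by_cases hcase : σ p = (⟨k, by omega⟩ : Fin n) ∧ σ q = ⟨k + 1, hk⟩
        · have hp : p = σ⁻¹ ⟨k, by omega⟩ := by rw [← hcase.1, Equiv.Perm.coe_inv, Equiv.symm_apply_apply]
          have hq : q = σ⁻¹ ⟨k + 1, hk⟩ := by rw [← hcase.2, Equiv.Perm.coe_inv, Equiv.symm_apply_apply]
          rw [hp, hq] at hpq
          exact absurd hdes (not_lt.mpr (le_of_lt hpq))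
        · have := swapMono k hk (σ p) (σ q) h hcase
          rw [hτapp p, hτapp q] at hinvτ
          exact absurd hinvτ (not_lt.mpr (le_of_lt this))
    have hτij : τ j < τ i := by
      rw [hτapp i, hτapp j]
      refine swapMono k hk (σ j) (σ i) hσij ?_
      intro ⟨h1, h2⟩
      exact hcon ⟨h2, h1⟩
    have hτ1 : τ ≠ 1 := by
      intro h
      rw [h] at hτij
      simp only [Equiv.Perm.one_apply] at hτij
      exact absurd hτij (not_lt.mpr (le_of_lt hij))
    have hτrev : τ ≠ Fin.revPerm := by
      intro h
      set p0 := σ⁻¹ (⟨k + 1, hk⟩ : Fin n) with hp0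
      set q0 := σ⁻¹ (⟨k, by omega⟩ : Fin n) with hq0
      have hlt : τ p0 < τ q0 := by
        rw [hτapp p0, hτapp q0, hp0, hq0, Equiv.Perm.coe_inv, Equiv.apply_symm_apply,
          Equiv.apply_symm_apply, hs, Equiv.swap_apply_right, Equiv.swap_apply_left]
        exact Fin.lt_def.mpr (by simp)
      rw [h] at hlt
      simp only [Fin.revPerm_apply] at hlt
      rw [Fin.rev_lt_rev] at hlt
      exact absurd hdes (not_lt.mpr (le_of_lt hlt))
    have hτne : τ ≠ σ := by
      intro h
      have h1 : τ (σ⁻¹ ⟨k, by omega⟩) = ⟨k + 1, hk⟩ := by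
        rw [hτapp, Equiv.Perm.coe_inv, Equiv.apply_symm_apply, hs, Equiv.swap_apply_left]
      rw [h, Equiv.Perm.coe_inv, Equiv.apply_symm_apply] at h1
      exact absurd (congrArg Fin.val h1) (by simp)
    exact hτne (hmin τ ⟨hτ1, hτrev, hτij⟩ hτσ)
  -- non-descent steps away from σ j
  have hstep : ∀ (k : ℕ) (hk : k + 1 < n), k ≠ ((σ j : Fin n) : ℕ) →
      σ⁻¹ ⟨k, by omega⟩ < σ⁻¹ ⟨k + 1, hk⟩ := by
    intro k hk hkj
    by_contra h
    push_neg at h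
    have hne : σ⁻¹ (⟨k + 1, hk⟩ : Fin n) ≠ σ⁻¹ ⟨k, by omega⟩ := by
      intro h'
      have := σ⁻¹.injective h'
      exact absurd (congrArg Fin.val this) (by simp)
    have hdes : σ⁻¹ (⟨k + 1, hk⟩ : Fin n) < σ⁻¹ ⟨k, by omega⟩ := lt_of_le_of_ne h hne
    have h2 := congrArg Fin.val (hP k hk hdes).2
    exact hkj h2.symm
  -- descent at σ j exists, and σ i = σ j + 1
  have hsj1 : ((σ j : Fin n) : ℕ) + 1 < n := lt_of_le_of_lt hσij' (σ i).isLt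
  have hDj : σ⁻¹ ⟨((σ j : Fin n) : ℕ) + 1, hsj1⟩ < σ⁻¹ ⟨((σ j : Fin n) : ℕ), by omega⟩ := by
    by_contra h
    push_neg at h
    have key := monoAux σ⁻¹ ((σ j : Fin n) : ℕ) (((σ i : Fin n) : ℕ) - (σ j : Fin n)) (by omega) ?_
    · have e1 : (⟨((σ j : Fin n) : ℕ), by omega⟩ : Fin n) = σ j := Fin.ext rfl
      have e2 : (⟨((σ j : Fin n) : ℕ) + (((σ i : Fin n) : ℕ) - (σ j : Fin n)), by omega⟩ : Fin n)
          = σ i := Fin.ext (by simp; omega)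
      rw [e1, e2, Equiv.Perm.coe_inv, Equiv.symm_apply_apply, Equiv.symm_apply_apply] at key
      exact absurd key (not_le.mpr hij)
    · intro k hk hk1 hk2
      rcases eq_or_ne k ((σ j : Fin n) : ℕ) with heq | hne
      · have ek : (⟨k, by omega⟩ : Fin n) = ⟨((σ j : Fin n) : ℕ), by omega⟩ := Fin.ext heq
        have ek1 : (⟨k + 1, hk⟩ : Fin n) = ⟨((σ j : Fin n) : ℕ) + 1, hsj1⟩ :=
          Fin.ext (by simp [heq])
        rw [ek, ek1]
        rcases lt_or_ge (σ⁻¹ (⟨((σ j : Fin n) : ℕ), by omega⟩ : Fin n))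
          (σ⁻¹ ⟨((σ j : Fin n) : ℕ) + 1, hsj1⟩) with h' | h'
        · exact h'
        · exact absurd (congrArg Fin.val (σ⁻¹.injective (le_antisymm h' h))) (by simp)
      · exact hstep k hk hne
  have hσi : ((σ i : Fin n) : ℕ) = ((σ j : Fin n) : ℕ) + 1 := by
    have := (hP ((σ j : Fin n) : ℕ) hsj1 hDj).1
    exact congrArg Fin.val this
  -- final: every inversion of σ lies in [i,j]²
  intro a b hab hinv
  have hab' : (a : ℕ) < b := hab
  have hinv' : ((σ b : Fin n) : ℕ) < (σ a : Fin n) := hinv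
  have han : ((σ a : Fin n) : ℕ) < n := (σ a).isLt
  -- σ b ≤ σ j
  have hbj' : ((σ b : Fin n) : ℕ) ≤ (σ j : Fin n) := by
    by_contra h
    push_neg at h
    have key := monoAux σ⁻¹ ((σ b : Fin n) : ℕ) (((σ a : Fin n) : ℕ) - (σ b : Fin n)) (by omega)
      (fun k hk h1 h2 => hstep k hk (by omega))
    have e1 : (⟨((σ b : Fin n) : ℕ), by omega⟩ : Fin n) = σ b := Fin.ext rfl
    have e2 : (⟨((σ b : Fin n) : ℕ) + (((σ a : Fin n) : ℕ) - (σ b : Fin n)), by omega⟩ : Fin n)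
        = σ a := Fin.ext (by simp; omega)
    rw [e1, e2, Equiv.Perm.coe_inv, Equiv.symm_apply_apply, Equiv.symm_apply_apply] at key
    exact absurd key (not_le.mpr hab)
  -- σ i ≤ σ a
  have hai' : ((σ j : Fin n) : ℕ) + 1 ≤ (σ a : Fin n) := by
    by_contra h
    push_neg at h
    have key := monoAux σ⁻¹ ((σ b : Fin n) : ℕ) (((σ a : Fin n) : ℕ) - (σ b : Fin n)) (by omega)
      (fun k hk h1 h2 => hstep k hk (by omega))
    have e1 : (⟨((σ b : Fin n) : ℕ), by omega⟩ : Fin n) = σ b := Fin.ext rfl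
    have e2 : (⟨((σ b : Fin n) : ℕ) + (((σ a : Fin n) : ℕ) - (σ b : Fin n)), by omega⟩ : Fin n)
        = σ a := Fin.ext (by simp; omega)
    rw [e1, e2, Equiv.Perm.coe_inv, Equiv.symm_apply_apply, Equiv.symm_apply_apply] at key
    exact absurd key (not_le.mpr hab)
  -- b ≤ j
  have hbj : (b : ℕ) ≤ j := by
    have key := monoAux σ⁻¹ ((σ b : Fin n) : ℕ) (((σ j : Fin n) : ℕ) - (σ b : Fin n)) (by omega)
      (fun k hk h1 h2 => hstep k hk (by omega))
    have e1 : (⟨((σ b : Fin n) : ℕ), by omega⟩ : Fin n) = σ b := Fin.ext rfl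
    have e2 : (⟨((σ b : Fin n) : ℕ) + (((σ j : Fin n) : ℕ) - (σ b : Fin n)), by omega⟩ : Fin n)
        = σ j := Fin.ext (by simp; omega)
    rw [e1, e2, Equiv.Perm.coe_inv, Equiv.symm_apply_apply, Equiv.symm_apply_apply] at key
    exact key
  -- i ≤ a
  have hia : (i : ℕ) ≤ a := by
    have key := monoAux σ⁻¹ (((σ j : Fin n) : ℕ) + 1)
      (((σ a : Fin n) : ℕ) - ((σ j : Fin n) + 1)) (by omega)
      (fun k hk h1 h2 => hstep k hk (by omega))
    have e1 : (⟨((σ j : Fin n) : ℕ) + 1, by omega⟩ : Fin n) = σ i := Fin.ext (by simp [hσi])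
    have e2 : (⟨((σ j : Fin n) : ℕ) + 1 + (((σ a : Fin n) : ℕ) - ((σ j : Fin n) + 1)), by omega⟩
        : Fin n) = σ a := Fin.ext (by simp; omega)
    rw [e1, e2, Equiv.Perm.coe_inv, Equiv.symm_apply_apply, Equiv.symm_apply_apply] at key
    exact key
  -- conclude: σ₀ b < σ₀ a
  have hib : (i : ℕ) ≤ b := le_of_lt (lt_of_le_of_lt hia hab')
  have haj : (a : ℕ) ≤ j := le_of_lt (lt_of_lt_of_le hab' hbj)
  rw [hval a hia haj, hval b hib hbj]
  exact Fin.lt_def.mpr (by simp; omega)
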